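/- arXiv:1711.05524 — 4 statements merged into one kernel-verified Lean document; each statement's English description precedes it below -/
import Mathlib

section
/- Let X₁ ~ Poisson(n₁p₁) and X₂ ~ Poisson(n₂p₂) be independent, and define f(x₁,x₂) = (x₁/n₁ - x₂/n₂)² - x₁/n₁² - x₂/n₂² - 2(p₁-p₂)(x₁/n₁ - x₂/n₂) + (p₁-p₂)². Then Cov(f(X₁,X₂), X₁) = 0 and Cov(f(X₁,X₂), X₂) = 0. -/
open MeasureTheory ProbabilityTheory

/-- `X` has the Poisson distribution with mean `l` under `μ`. -/
def IsPoisson {Ω : Type*} [MeasurableSpace Ω] (μ : Measure Ω) (X : Ω → ℕ) (l : ℝ) : Prop :=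
  ∀ m : ℕ, (μ (X ⁻¹' {m})).toReal = Real.exp (-l) * l ^ m / m.factorial

/-- Covariance of two real random variables. -/
noncomputable def cov {Ω : Type*} [MeasurableSpace Ω] (μ : Measure Ω) (f g : Ω → ℝ) : ℝ :=
  (∫ ω, f ω * g ω ∂μ) - (∫ ω, f ω ∂μ) * (∫ ω, g ω ∂μ)

section Aux

lemma aux_hasSum_desc {l : ℝ} (k : ℕ) :
    HasSum (fun m : ℕ => (m.descFactorial k : ℝ) * (Real.exp (-l) * l ^ m / m.factorial))
      (l ^ k) := by
  set f : ℕ → ℝ := fun m => (m.descFactorial k : ℝ) * (Real.exp (-l) * l ^ m / m.factorial)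
    with hf
  have hshift : HasSum (fun j : ℕ => f (j + k)) (l ^ k) := by
    have hexp : HasSum (fun j : ℕ => l ^ j / j.factorial) (Real.exp l) := by
      rw [Real.exp_eq_exp_ℝ]
      exact NormedSpace.expSeries_div_hasSum_exp l
    have h2 := hexp.mul_left (Real.exp (-l) * l ^ k)
    have heq : (fun j : ℕ => Real.exp (-l) * l ^ k * (l ^ j / j.factorial)) =
        fun j : ℕ => f (j + k) := by
      funext j
      have hfac : (j.factorial : ℝ) * ((j + k).descFactorial k : ℝ) = ((j + k).factorial : ℝ) := by
        exact_mod_cast congrArg (Nat.cast (R := ℝ))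
          (by simpa using Nat.factorial_mul_descFactorial (Nat.le_add_left k j))
      have hne : (j.factorial : ℝ) ≠ 0 := by positivity
      have hdne : ((j + k).descFactorial k : ℝ) ≠ 0 := by
        have : ¬ (j + k < k) := by omega
        exact_mod_cast fun h => this (Nat.descFactorial_eq_zero_iff_lt.mp (by exact_mod_cast h))
      simp only [hf]
      rw [pow_add, ← hfac]
      field_simp
    rw [heq] at h2
    rw [mul_right_comm, ← Real.exp_add] at h2
    simpa using h2
  have h3 := (hasSum_nat_add_iff (f := f) k).mp hshift
  have hz : ∑ i ∈ Finset.range k, f i = 0 := by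
    refine Finset.sum_eq_zero fun i hi => ?_
    simp only [hf]
    rw [Nat.descFactorial_eq_zero_iff_lt.mpr (Finset.mem_range.mp hi)]
    simp
  rwa [hz, add_zero] at h3

lemma aux_cast_d3 (m : ℕ) : (m.descFactorial 3 : ℝ) = m ^ 3 - 3 * m ^ 2 + 2 * m := by
  rcases m with _ | _ | m
  · simp [Nat.descFactorial]
  · norm_num [Nat.descFactorial]
  · have : (m + 2).descFactorial 3 = m * ((m + 1) * ((m + 2) * 1)) := by
      simp [Nat.descFactorial]
    rw [this]
    push_cast
    ring

lemma aux_cast_d2 (m : ℕ) : (m.descFactorial 2 : ℝ) = m ^ 2 - m := by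
  rw [Nat.cast_descFactorial_two]; ring

lemma aux_hasSum_pois0 {l : ℝ} :
    HasSum (fun m : ℕ => (m : ℝ) ^ 0 * (Real.exp (-l) * l ^ m / m.factorial)) 1 := by
  simpa using aux_hasSum_desc (l := l) 0

lemma aux_hasSum_pois1 {l : ℝ} :
    HasSum (fun m : ℕ => (m : ℝ) ^ 1 * (Real.exp (-l) * l ^ m / m.factorial)) l := by
  simpa using aux_hasSum_desc (l := l) 1

lemma aux_hasSum_pois2 {l : ℝ} :
    HasSum (fun m : ℕ => (m : ℝ) ^ 2 * (Real.exp (-l) * l ^ m / m.factorial)) (l ^ 2 + l) := by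
  have h := (aux_hasSum_desc (l := l) 2).add (aux_hasSum_desc (l := l) 1)
  rw [pow_one] at h
  convert h using 2 with m
  rw [aux_cast_d2, Nat.descFactorial_one]
  ring

lemma aux_hasSum_pois3 {l : ℝ} :
    HasSum (fun m : ℕ => (m : ℝ) ^ 3 * (Real.exp (-l) * l ^ m / m.factorial))
      (l ^ 3 + 3 * l ^ 2 + l) := by
  have h := ((aux_hasSum_desc (l := l) 3).add
    ((aux_hasSum_desc (l := l) 2).mul_left 3)).add (aux_hasSum_desc (l := l) 1)
  rw [pow_one] at h
  convert h using 2 with m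
  rw [aux_cast_d3, aux_cast_d2, Nat.descFactorial_one]
  ring

/-- `f` is integrable with expectation `r`. -/
def HE {Ω : Type*} [MeasurableSpace Ω] (μ : Measure Ω) (f : Ω → ℝ) (r : ℝ) : Prop :=
  Integrable f μ ∧ ∫ ω, f ω ∂μ = r

variable {Ω : Type*} [MeasurableSpace Ω] {μ : Measure Ω} {f g : Ω → ℝ} {a b : ℝ}

lemma HE.add (hf : HE μ f a) (hg : HE μ g b) : HE μ (fun ω => f ω + g ω) (a + b) :=
  ⟨hf.1.add hg.1, by rw [integral_add hf.1 hg.1, hf.2, hg.2]⟩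

lemma HE.cmul (c : ℝ) (hf : HE μ f a) : HE μ (fun ω => c * f ω) (c * a) :=
  ⟨hf.1.const_mul c, by rw [integral_const_mul, hf.2]⟩

lemma HE.congr (hf : HE μ f a) (h : ∀ ω, f ω = g ω) : HE μ g a := by
  have : f = g := funext h
  rwa [← this]

lemma HE_mul (hi : IndepFun f g μ) (hf : HE μ f a) (hg : HE μ g b) :
    HE μ (fun ω => f ω * g ω) (a * b) :=
  ⟨hi.integrable_mul hf.1 hg.1,
    by rw [show ∫ ω, f ω * g ω ∂μ = ∫ ω, (f * g) ω ∂μ from rfl,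
      hi.integral_mul_eq_mul_integral hf.1.aestronglyMeasurable hg.1.aestronglyMeasurable, hf.2, hg.2]⟩

lemma HE_pow [IsProbabilityMeasure μ]
    {X : Ω → ℕ} (hXm : Measurable X) {l : ℝ} (hX : IsPoisson μ X l)
    {k : ℕ} {Mk : ℝ}
    (hs : HasSum (fun m : ℕ => (m : ℝ) ^ k * (Real.exp (-l) * l ^ m / m.factorial)) Mk) :
    HE μ (fun ω => (X ω : ℝ) ^ k) Mk := by
  set ν : Measure ℕ := μ.map X with hν
  have hinst : IsProbabilityMeasure ν := Measure.isProbabilityMeasure_map hXm.aemeasurable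
  have hνm : ∀ m : ℕ, (ν {m}).toReal = Real.exp (-l) * l ^ m / m.factorial := by
    intro m
    rw [hν, Measure.map_apply hXm (measurableSet_singleton m)]
    exact hX m
  set gg : ℕ → ℝ := fun m => (m : ℝ) ^ k with hg
  have hgm : Measurable gg := measurable_of_countable gg
  have hint : Integrable gg ν := by
    refine ⟨hgm.aestronglyMeasurable, ?_⟩
    rw [hasFiniteIntegral_def, lintegral_countable' (f := fun m => ‖gg m‖ₑ)]
    have heach : ∀ m : ℕ, (‖gg m‖₊ : ENNReal) * ν {m}
        = ENNReal.ofReal ((m : ℝ) ^ k * (Real.exp (-l) * l ^ m / m.factorial)) := by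
      intro m
      rw [ENNReal.ofReal_mul (by positivity), ← hνm m,
        ENNReal.ofReal_toReal (measure_ne_top ν _)]
      congr 1
      simp only [hg]
      rw [← Real.toNNReal_eq_nnnorm_of_nonneg (by positivity)]
      rfl
    calc ∑' m, (‖gg m‖₊ : ENNReal) * ν {m}
        = ∑' m : ℕ, ENNReal.ofReal ((m : ℝ) ^ k * (Real.exp (-l) * l ^ m / m.factorial)) :=
          tsum_congr heach
      _ = ENNReal.ofReal Mk := by
          rw [← ENNReal.ofReal_tsum_of_nonneg (fun m => ?_) hs.summable, hs.tsum_eq]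
          have h0 : 0 ≤ Real.exp (-l) * l ^ m / m.factorial := by rw [← hνm m]; positivity
          positivity
      _ < ⊤ := ENNReal.ofReal_lt_top
  have hintΩ : Integrable (fun ω => gg (X ω)) μ :=
    (integrable_map_measure hgm.aestronglyMeasurable hXm.aemeasurable).mp hint
  refine ⟨hintΩ, ?_⟩
  have h1 : ∫ ω, gg (X ω) ∂μ = ∫ m, gg m ∂ν :=
    (integral_map hXm.aemeasurable hgm.aestronglyMeasurable).symm
  rw [show (fun ω => (X ω : ℝ) ^ k) = fun ω => gg (X ω) from rfl, h1,
    integral_countable' hint]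
  calc ∑' m, (ν {m}).toReal • gg m = ∑' m, gg m * (Real.exp (-l) * l ^ m / m.factorial) := by
        refine tsum_congr fun m => ?_
        rw [hνm m, smul_eq_mul, mul_comm]
    _ = Mk := hs.tsum_eq

end Aux

set_option maxHeartbeats 2000000 in
theorem stmt_9 {Ω : Type*} [MeasurableSpace Ω] (μ : Measure Ω) [IsProbabilityMeasure μ]
    (X₁ X₂ : Ω → ℕ) (hX₁m : Measurable X₁) (hX₂m : Measurable X₂)
    (n₁ n₂ p₁ p₂ : ℝ) (hn₁ : 0 < n₁) (hn₂ : 0 < n₂)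
    (hp₁ : p₁ ∈ Set.Icc (0 : ℝ) 1) (hp₂ : p₂ ∈ Set.Icc (0 : ℝ) 1)
    (hX₁ : IsPoisson μ X₁ (n₁ * p₁)) (hX₂ : IsPoisson μ X₂ (n₂ * p₂))
    (hind : IndepFun X₁ X₂ μ) :
    cov μ (fun ω => ((X₁ ω : ℝ) / n₁ - (X₂ ω : ℝ) / n₂) ^ 2
        - (X₁ ω : ℝ) / n₁ ^ 2 - (X₂ ω : ℝ) / n₂ ^ 2
        - 2 * (p₁ - p₂) * ((X₁ ω : ℝ) / n₁ - (X₂ ω : ℝ) / n₂) + (p₁ - p₂) ^ 2)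
      (fun ω => (X₁ ω : ℝ)) = 0 ∧
    cov μ (fun ω => ((X₁ ω : ℝ) / n₁ - (X₂ ω : ℝ) / n₂) ^ 2
        - (X₁ ω : ℝ) / n₁ ^ 2 - (X₂ ω : ℝ) / n₂ ^ 2
        - 2 * (p₁ - p₂) * ((X₁ ω : ℝ) / n₁ - (X₂ ω : ℝ) / n₂) + (p₁ - p₂) ^ 2)
      (fun ω => (X₂ ω : ℝ)) = 0 := by
  -- one-variable moments
  have e10 := HE_pow hX₁m hX₁ (aux_hasSum_pois0 (l := n₁ * p₁))
  have e11 := HE_pow hX₁m hX₁ (aux_hasSum_pois1 (l := n₁ * p₁))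
  have e12 := HE_pow hX₁m hX₁ (aux_hasSum_pois2 (l := n₁ * p₁))
  have e13 := HE_pow hX₁m hX₁ (aux_hasSum_pois3 (l := n₁ * p₁))
  have e20 := HE_pow hX₂m hX₂ (aux_hasSum_pois0 (l := n₂ * p₂))
  have e21 := HE_pow hX₂m hX₂ (aux_hasSum_pois1 (l := n₂ * p₂))
  have e22 := HE_pow hX₂m hX₂ (aux_hasSum_pois2 (l := n₂ * p₂))
  have e23 := HE_pow hX₂m hX₂ (aux_hasSum_pois3 (l := n₂ * p₂))
  -- independence of powers
  have hInd : ∀ (s t : ℕ), IndepFun (fun ω => (X₁ ω : ℝ) ^ s) (fun ω => (X₂ ω : ℝ) ^ t) μ :=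
    fun s t => hind.comp (measurable_of_countable (fun m : ℕ => (m : ℝ) ^ s))
      (measurable_of_countable (fun m : ℕ => (m : ℝ) ^ t))
  -- joint moments
  have T30 := HE_mul (hInd 3 0) e13 e20
  have T21 := HE_mul (hInd 2 1) e12 e21
  have T12 := HE_mul (hInd 1 2) e11 e22
  have T03 := HE_mul (hInd 0 3) e10 e23
  have T20 := HE_mul (hInd 2 0) e12 e20
  have T11 := HE_mul (hInd 1 1) e11 e21
  have T02 := HE_mul (hInd 0 2) e10 e22
  have T10 := HE_mul (hInd 1 0) e11 e20
  have T01 := HE_mul (hInd 0 1) e10 e21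
  have T00 := HE_mul (hInd 0 0) e10 e20
  set d : ℝ := p₁ - p₂ with hd
  set c20 : ℝ := 1 / n₁ ^ 2 with hc20
  set c11 : ℝ := -2 / (n₁ * n₂) with hc11
  set c02 : ℝ := 1 / n₂ ^ 2 with hc02
  set c10 : ℝ := -(1 / n₁ ^ 2) - 2 * d / n₁ with hc10
  set c01 : ℝ := -(1 / n₂ ^ 2) + 2 * d / n₂ with hc01
  have hn₁' : n₁ ≠ 0 := ne_of_gt hn₁
  have hn₂' : n₂ ≠ 0 := ne_of_gt hn₂
  -- expectation of F
  have hF := ((((((T20.cmul c20).add (T11.cmul c11)).add (T02.cmul c02)).add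
      (T10.cmul c10)).add (T01.cmul c01)).add (T00.cmul (d ^ 2))).congr
    (g := fun ω => ((X₁ ω : ℝ) / n₁ - (X₂ ω : ℝ) / n₂) ^ 2
        - (X₁ ω : ℝ) / n₁ ^ 2 - (X₂ ω : ℝ) / n₂ ^ 2
        - 2 * (p₁ - p₂) * ((X₁ ω : ℝ) / n₁ - (X₂ ω : ℝ) / n₂) + (p₁ - p₂) ^ 2)
    (fun ω => by rw [hc20, hc11, hc02, hc10, hc01, hd]; field_simp; ring)
  -- expectation of F * X₁
  have hFX₁ := ((((((T30.cmul c20).add (T21.cmul c11)).add (T12.cmul c02)).add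
      (T20.cmul c10)).add (T11.cmul c01)).add (T10.cmul (d ^ 2))).congr
    (g := fun ω => (((X₁ ω : ℝ) / n₁ - (X₂ ω : ℝ) / n₂) ^ 2
        - (X₁ ω : ℝ) / n₁ ^ 2 - (X₂ ω : ℝ) / n₂ ^ 2
        - 2 * (p₁ - p₂) * ((X₁ ω : ℝ) / n₁ - (X₂ ω : ℝ) / n₂) + (p₁ - p₂) ^ 2) * (X₁ ω : ℝ))
    (fun ω => by rw [hc20, hc11, hc02, hc10, hc01, hd]; field_simp; ring)
  -- expectation of F * X₂
  have hFX₂ := ((((((T21.cmul c20).add (T12.cmul c11)).add (T03.cmul c02)).add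
      (T11.cmul c10)).add (T02.cmul c01)).add (T01.cmul (d ^ 2))).congr
    (g := fun ω => (((X₁ ω : ℝ) / n₁ - (X₂ ω : ℝ) / n₂) ^ 2
        - (X₁ ω : ℝ) / n₁ ^ 2 - (X₂ ω : ℝ) / n₂ ^ 2
        - 2 * (p₁ - p₂) * ((X₁ ω : ℝ) / n₁ - (X₂ ω : ℝ) / n₂) + (p₁ - p₂) ^ 2) * (X₂ ω : ℝ))
    (fun ω => by rw [hc20, hc11, hc02, hc10, hc01, hd]; field_simp; ring)
  have hx₁ := e11.congr (g := fun ω => (X₁ ω : ℝ)) (fun ω => by ring)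
  have hx₂ := e21.congr (g := fun ω => (X₂ ω : ℝ)) (fun ω => by ring)
  constructor
  · simp only [cov]
    rw [hFX₁.2, hF.2, hx₁.2]
    rw [hc20, hc11, hc02, hc10, hc01, hd]
    field_simp
    ring
  · simp only [cov]
    rw [hFX₂.2, hF.2, hx₂.2]
    rw [hc20, hc11, hc02, hc10, hc01, hd]
    field_simp
    ring
end

section
/- Let X₁ ~ Poisson(n₁p₁) and X₂ ~ Poisson(n₂p₂) be independent, and define f(x₁,x₂) = (x₁/n₁ - x₂/n₂)² - x₁/n₁² - x₂/n₂² - 2(p₁-p₂)(x₁/n₁ - x₂/n₂) + (p₁-p₂)². Then Var(f(X₁,X₂)) = 2(p₁/n₁ + p₂/n₂)². -/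
open MeasureTheory ProbabilityTheory

lemma hasSum_pois (l : ℝ) :
    HasSum (fun k : ℕ => Real.exp (-l) * l ^ k / (k.factorial : ℝ)) 1 := by
  have h := (NormedSpace.expSeries_div_hasSum_exp l).mul_left (Real.exp (-l))
  have hv : Real.exp (-l) * NormedSpace.exp l = 1 := by
    rw [← Real.exp_eq_exp_ℝ, ← Real.exp_add]; simp
  rw [hv] at h
  convert h using 2 with k
  · rfl
  ring

lemma hasSum_pois_desc (l : ℝ) (r : ℕ) :
    HasSum (fun k : ℕ => Real.exp (-l) * l ^ k / (k.factorial : ℝ) * (k.descFactorial r : ℝ))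
      (l ^ r) := by
  set f : ℕ → ℝ := fun k => Real.exp (-l) * l ^ k / (k.factorial : ℝ) * (k.descFactorial r : ℝ)
    with hf
  have h1 : HasSum (fun j : ℕ => f (j + r)) (l ^ r) := by
    have heq : ∀ j : ℕ, f (j + r)
        = l ^ r * (Real.exp (-l) * l ^ j / (j.factorial : ℝ)) := by
      intro j
      have hfac : ((j + r).factorial : ℝ)
          = (j.factorial : ℝ) * ((j + r).descFactorial r : ℝ) := by
        have := Nat.factorial_mul_descFactorial (Nat.le_add_left r j)
        rw [Nat.add_sub_cancel] at this
        exact_mod_cast this.symm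
      have hjpos : (0:ℝ) < (j.factorial : ℝ) := by exact_mod_cast j.factorial_pos
      have hdpos : (0:ℝ) < ((j + r).descFactorial r : ℝ) := by
        have : (j + r).descFactorial r ≠ 0 := by
          rw [Ne, Nat.descFactorial_eq_zero_iff_lt]; omega
        exact_mod_cast Nat.pos_of_ne_zero this
      rw [hf]
      simp only [pow_add]
      rw [hfac]
      field_simp
    rw [funext heq]
    simpa using (hasSum_pois l).mul_left (l ^ r)
  have h2 := (hasSum_nat_add_iff (f := f) r).mp h1
  have hz : ∑ i ∈ Finset.range r, f i = 0 := by
    apply Finset.sum_eq_zero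
    intro i hi
    have : i.descFactorial r = 0 :=
      Nat.descFactorial_eq_zero_iff_lt.mpr (Finset.mem_range.mp hi)
    simp [hf, this]
  rw [hz, add_zero] at h2
  exact h2

lemma desc1 (k : ℕ) : (k.descFactorial 1 : ℝ) = k := by simp
lemma desc2 (k : ℕ) : (k.descFactorial 2 : ℝ) = (k:ℝ)^2 - k := by
  rcases k with _ | m
  · simp
  · simp [Nat.descFactorial]; ring
lemma desc3 (k : ℕ) : (k.descFactorial 3 : ℝ) = (k:ℝ)^3 - 3*(k:ℝ)^2 + 2*k := by
  rcases k with _ | _ | m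
  · simp
  · norm_num [Nat.descFactorial]
  · simp [Nat.descFactorial]; push_cast; ring
lemma desc4 (k : ℕ) : (k.descFactorial 4 : ℝ) = (k:ℝ)^4 - 6*(k:ℝ)^3 + 11*(k:ℝ)^2 - 6*k := by
  rcases k with _ | _ | _ | m
  · simp
  · norm_num [Nat.descFactorial]
  · norm_num [Nat.descFactorial]
  · simp [Nat.descFactorial]; push_cast; ring

noncomputable def pmom (l : ℝ) : Fin 5 → ℝ := ![1, l, l^2+l, l^3+3*l^2+l, l^4+6*l^3+7*l^2+l]

lemma hasSum_pois_pow (l : ℝ) (r : Fin 5) :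
    HasSum (fun k : ℕ => Real.exp (-l) * l ^ k / (k.factorial : ℝ) * (k:ℝ)^(r:ℕ))
      (![1, l, l^2+l, l^3+3*l^2+l, l^4+6*l^3+7*l^2+l] r) := by
  have d1 := hasSum_pois_desc l 1
  have d2 := hasSum_pois_desc l 2
  have d3 := hasSum_pois_desc l 3
  have d4 := hasSum_pois_desc l 4
  fin_cases r
  · simpa using hasSum_pois l
  · have := d1
    simp only [desc1] at this
    simpa using this
  · have h := d2.add d1
    have he : (fun k : ℕ => Real.exp (-l) * l ^ k / (k.factorial : ℝ) * (k.descFactorial 2 : ℝ)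
        + Real.exp (-l) * l ^ k / (k.factorial : ℝ) * (k.descFactorial 1 : ℝ))
        = fun k : ℕ => Real.exp (-l) * l ^ k / (k.factorial : ℝ) * (k:ℝ)^2 := by
      funext k; rw [desc1, desc2]; ring
    rw [he] at h
    simpa [pow_one] using h
  · have h := (d3.add ((d2.mul_left 3).add d1))
    have he : (fun k : ℕ => Real.exp (-l) * l ^ k / (k.factorial : ℝ) * (k.descFactorial 3 : ℝ)
        + (3 * (Real.exp (-l) * l ^ k / (k.factorial : ℝ) * (k.descFactorial 2 : ℝ))
          + Real.exp (-l) * l ^ k / (k.factorial : ℝ) * (k.descFactorial 1 : ℝ)))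
        = fun k : ℕ => Real.exp (-l) * l ^ k / (k.factorial : ℝ) * (k:ℝ)^3 := by
      funext k; rw [desc1, desc2, desc3]; ring
    rw [he] at h
    simpa [pow_one, ← add_assoc] using h
  · have h := (d4.add ((d3.mul_left 6).add ((d2.mul_left 7).add d1)))
    have he : (fun k : ℕ => Real.exp (-l) * l ^ k / (k.factorial : ℝ) * (k.descFactorial 4 : ℝ)
        + (6 * (Real.exp (-l) * l ^ k / (k.factorial : ℝ) * (k.descFactorial 3 : ℝ))
          + (7 * (Real.exp (-l) * l ^ k / (k.factorial : ℝ) * (k.descFactorial 2 : ℝ))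
            + Real.exp (-l) * l ^ k / (k.factorial : ℝ) * (k.descFactorial 1 : ℝ))))
        = fun k : ℕ => Real.exp (-l) * l ^ k / (k.factorial : ℝ) * (k:ℝ)^4 := by
      funext k; rw [desc1, desc2, desc3, desc4]; ring
    rw [he] at h
    simpa [pow_one, ← add_assoc] using h

lemma pois_pow {Ω : Type*} [MeasurableSpace Ω] (μ : Measure Ω) [IsProbabilityMeasure μ]
    (X : Ω → ℕ) (hXm : Measurable X) (l : ℝ) (hX : IsPoisson μ X l) (r : ℕ) (m : ℝ)
    (hm : HasSum (fun k : ℕ => Real.exp (-l) * l ^ k / (k.factorial : ℝ) * (k:ℝ)^r) m) :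
    Integrable (fun ω => (X ω : ℝ)^r) μ ∧ ∫ ω, (X ω : ℝ)^r ∂μ = m := by
  have hpm : ∀ k : ℕ, 0 ≤ Real.exp (-l) * l ^ k / (k.factorial : ℝ) := by
    intro k; rw [← hX k]; exact ENNReal.toReal_nonneg
  have hmap : ∀ k : ℕ, μ.map X {k} = ENNReal.ofReal (Real.exp (-l) * l ^ k / (k.factorial : ℝ)) := by
    intro k
    rw [Measure.map_apply hXm (measurableSet_singleton k), ← hX k,
      ENNReal.ofReal_toReal (measure_ne_top μ _)]
  set g : ℕ → ℝ := fun k => (k:ℝ)^r with hg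
  have hints : Integrable g (μ.map X) := by
    refine ⟨(measurable_of_countable g).aestronglyMeasurable, ?_⟩
    rw [HasFiniteIntegral, lintegral_countable']
    have heq : ∀ k : ℕ, ‖g k‖ₑ * (μ.map X) {k}
        = ENNReal.ofReal (Real.exp (-l) * l ^ k / (k.factorial : ℝ) * (k:ℝ)^r) := by
      intro k
      rw [hmap k, Real.enorm_eq_ofReal (by positivity),
        ← ENNReal.ofReal_mul (by positivity)]
      congr 1
      simp only [hg]
      ring
    rw [tsum_congr heq, ← ENNReal.ofReal_tsum_of_nonneg
      (fun k => by have := hpm k; positivity) hm.summable]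
    exact ENNReal.ofReal_lt_top
  have hI : Integrable (fun ω => (X ω : ℝ)^r) μ := by
    have := (integrable_map_measure hints.1 hXm.aemeasurable).mp hints
    exact this
  refine ⟨hI, ?_⟩
  have h1 : ∫ ω, (X ω : ℝ)^r ∂μ = ∫ k, g k ∂(μ.map X) :=
    (integral_map hXm.aemeasurable hints.1).symm
  rw [h1, integral_countable' hints]
  have heq2 : ∀ k : ℕ, (μ.map X).real {k} • g k
      = Real.exp (-l) * l ^ k / (k.factorial : ℝ) * (k:ℝ)^r := by
    intro k
    rw [measureReal_def, hmap k, ENNReal.toReal_ofReal (hpm k), smul_eq_mul]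
  rw [tsum_congr heq2]
  exact hm.tsum_eq

noncomputable def PP (c : Fin 5 → ℝ) (k : ℕ) : ℝ := ∑ i : Fin 5, c i * (k:ℝ)^(i:ℕ)

lemma pois_poly {Ω : Type*} [MeasurableSpace Ω] (μ : Measure Ω) [IsProbabilityMeasure μ]
    (X : Ω → ℕ) (hXm : Measurable X) (l : ℝ) (hX : IsPoisson μ X l) (c : Fin 5 → ℝ) :
    Integrable (fun ω => ∑ i : Fin 5, c i * (X ω : ℝ)^(i:ℕ)) μ ∧
    ∫ ω, ∑ i : Fin 5, c i * (X ω : ℝ)^(i:ℕ) ∂μ = ∑ i : Fin 5, c i * pmom l i := by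
  have H : ∀ i : Fin 5, Integrable (fun ω => (X ω : ℝ)^(i:ℕ)) μ
      ∧ ∫ ω, (X ω : ℝ)^(i:ℕ) ∂μ = pmom l i := fun i =>
    pois_pow μ X hXm l hX i (pmom l i) (hasSum_pois_pow l i)
  have hInt : ∀ i : Fin 5, Integrable (fun ω => c i * (X ω : ℝ)^(i:ℕ)) μ := fun i =>
    (H i).1.const_mul (c i)
  constructor
  · exact integrable_finset_sum _ (fun i _ => hInt i)
  · rw [integral_finset_sum _ (fun i _ => hInt i)]
    refine Finset.sum_congr rfl (fun i _ => ?_)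
    rw [integral_const_mul, (H i).2]

lemma PP_eval (c : Fin 5 → ℝ) (k : ℕ) :
    PP c k = c 0 + c 1 * k + c 2 * (k:ℝ)^2 + c 3 * (k:ℝ)^3 + c 4 * (k:ℝ)^4 := by
  simp [PP, Fin.sum_univ_five, show ((3:Fin 5):ℕ) = 3 from rfl,
    show ((4:Fin 5):ℕ) = 4 from rfl]

lemma msum_eval (c : Fin 5 → ℝ) (l : ℝ) :
    ∑ i : Fin 5, c i * pmom l i
      = c 0 + c 1 * l + c 2 * (l^2+l) + c 3 * (l^3+3*l^2+l) + c 4 * (l^4+6*l^3+7*l^2+l) := by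
  simp [pmom, Fin.sum_univ_five]

lemma PP_int {Ω : Type*} [MeasurableSpace Ω] (μ : Measure Ω) [IsProbabilityMeasure μ]
    (X : Ω → ℕ) (hXm : Measurable X) (l : ℝ) (hX : IsPoisson μ X l) (c : Fin 5 → ℝ) :
    Integrable (fun ω => PP c (X ω)) μ := (pois_poly μ X hXm l hX c).1

lemma PP_integral {Ω : Type*} [MeasurableSpace Ω] (μ : Measure Ω) [IsProbabilityMeasure μ]
    (X : Ω → ℕ) (hXm : Measurable X) (l : ℝ) (hX : IsPoisson μ X l) (c : Fin 5 → ℝ) :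
    ∫ ω, PP c (X ω) ∂μ
      = c 0 + c 1 * l + c 2 * (l^2+l) + c 3 * (l^3+3*l^2+l) + c 4 * (l^4+6*l^3+7*l^2+l) := by
  rw [← msum_eval]
  exact (pois_poly μ X hXm l hX c).2

set_option maxHeartbeats 2000000 in
theorem stmt_10 {Ω : Type*} [MeasurableSpace Ω] (μ : Measure Ω) [IsProbabilityMeasure μ]
    (X₁ X₂ : Ω → ℕ) (hX₁m : Measurable X₁) (hX₂m : Measurable X₂)
    (n₁ n₂ p₁ p₂ : ℝ) (hn₁ : 0 < n₁) (hn₂ : 0 < n₂)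
    (hp₁ : p₁ ∈ Set.Icc (0 : ℝ) 1) (hp₂ : p₂ ∈ Set.Icc (0 : ℝ) 1)
    (hX₁ : IsPoisson μ X₁ (n₁ * p₁)) (hX₂ : IsPoisson μ X₂ (n₂ * p₂))
    (hind : IndepFun X₁ X₂ μ) :
    variance (fun ω => ((X₁ ω : ℝ) / n₁ - (X₂ ω : ℝ) / n₂) ^ 2
        - (X₁ ω : ℝ) / n₁ ^ 2 - (X₂ ω : ℝ) / n₂ ^ 2
        - 2 * (p₁ - p₂) * ((X₁ ω : ℝ) / n₁ - (X₂ ω : ℝ) / n₂) + (p₁ - p₂) ^ 2) μ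
      = 2 * (p₁ / n₁ + p₂ / n₂) ^ 2 := by
  have hn₁' : n₁ ≠ 0 := ne_of_gt hn₁
  have hn₂' : n₂ ≠ 0 := ne_of_gt hn₂
  set l₁ : ℝ := n₁ * p₁ with hl₁
  set l₂ : ℝ := n₂ * p₂ with hl₂
  set F : Ω → ℝ := fun ω => ((X₁ ω : ℝ) / n₁ - (X₂ ω : ℝ) / n₂) ^ 2
        - (X₁ ω : ℝ) / n₁ ^ 2 - (X₂ ω : ℝ) / n₂ ^ 2
        - 2 * (p₁ - p₂) * ((X₁ ω : ℝ) / n₁ - (X₂ ω : ℝ) / n₂) + (p₁ - p₂) ^ 2 with hF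
  -- coefficient vectors
  set cu₁ : Fin 5 → ℝ := ![-(l₁/n₁), 1/n₁, 0, 0, 0] with hcu₁
  set cu₂ : Fin 5 → ℝ := ![-(l₂/n₂), 1/n₂, 0, 0, 0] with hcu₂
  set cg₁ : Fin 5 → ℝ := ![l₁^2/n₁^2, -((2*l₁+1)/n₁^2), 1/n₁^2, 0, 0] with hcg₁
  set cg₂ : Fin 5 → ℝ := ![l₂^2/n₂^2, -((2*l₂+1)/n₂^2), 1/n₂^2, 0, 0] with hcg₂
  set cq₁ : Fin 5 → ℝ := ![l₁^2/n₁^2, -(2*l₁/n₁^2), 1/n₁^2, 0, 0] with hcq₁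
  set cq₂ : Fin 5 → ℝ := ![l₂^2/n₂^2, -(2*l₂/n₂^2), 1/n₂^2, 0, 0] with hcq₂
  set cs₁ : Fin 5 → ℝ := ![l₁^4/n₁^4, -(2*l₁^2*(2*l₁+1)/n₁^4), ((2*l₁+1)^2+2*l₁^2)/n₁^4,
    -(2*(2*l₁+1)/n₁^4), 1/n₁^4] with hcs₁
  set cs₂ : Fin 5 → ℝ := ![l₂^4/n₂^4, -(2*l₂^2*(2*l₂+1)/n₂^4), ((2*l₂+1)^2+2*l₂^2)/n₂^4,
    -(2*(2*l₂+1)/n₂^4), 1/n₂^4] with hcs₂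
  set ct₁ : Fin 5 → ℝ := ![-(l₁^3/n₁^3), (3*l₁^2+l₁)/n₁^3, -((3*l₁+1)/n₁^3), 1/n₁^3, 0] with hct₁
  set ct₂ : Fin 5 → ℝ := ![-(l₂^3/n₂^3), (3*l₂^2+l₂)/n₂^3, -((3*l₂+1)/n₂^3), 1/n₂^3, 0] with hct₂
  -- the ten single-variable functions
  set U₁ : Ω → ℝ := fun ω => PP cu₁ (X₁ ω) with hU₁def
  set U₂ : Ω → ℝ := fun ω => PP cu₂ (X₂ ω) with hU₂def
  set G₁ : Ω → ℝ := fun ω => PP cg₁ (X₁ ω) with hG₁def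
  set G₂ : Ω → ℝ := fun ω => PP cg₂ (X₂ ω) with hG₂def
  set Q₁ : Ω → ℝ := fun ω => PP cq₁ (X₁ ω) with hQ₁def
  set Q₂ : Ω → ℝ := fun ω => PP cq₂ (X₂ ω) with hQ₂def
  set S₁ : Ω → ℝ := fun ω => PP cs₁ (X₁ ω) with hS₁def
  set S₂ : Ω → ℝ := fun ω => PP cs₂ (X₂ ω) with hS₂def
  set T₁ : Ω → ℝ := fun ω => PP ct₁ (X₁ ω) with hT₁def
  set T₂ : Ω → ℝ := fun ω => PP ct₂ (X₂ ω) with hT₂def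
  -- integrability
  have iU₁ : Integrable U₁ μ := PP_int μ X₁ hX₁m l₁ hX₁ cu₁
  have iU₂ : Integrable U₂ μ := PP_int μ X₂ hX₂m l₂ hX₂ cu₂
  have iG₁ : Integrable G₁ μ := PP_int μ X₁ hX₁m l₁ hX₁ cg₁
  have iG₂ : Integrable G₂ μ := PP_int μ X₂ hX₂m l₂ hX₂ cg₂
  have iQ₁ : Integrable Q₁ μ := PP_int μ X₁ hX₁m l₁ hX₁ cq₁
  have iQ₂ : Integrable Q₂ μ := PP_int μ X₂ hX₂m l₂ hX₂ cq₂
  have iS₁ : Integrable S₁ μ := PP_int μ X₁ hX₁m l₁ hX₁ cs₁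
  have iS₂ : Integrable S₂ μ := PP_int μ X₂ hX₂m l₂ hX₂ cs₂
  have iT₁ : Integrable T₁ μ := PP_int μ X₁ hX₁m l₁ hX₁ ct₁
  have iT₂ : Integrable T₂ μ := PP_int μ X₂ hX₂m l₂ hX₂ ct₂
  -- independence of composed pairs
  have ind : ∀ (c d : Fin 5 → ℝ),
      IndepFun (fun ω => PP c (X₁ ω)) (fun ω => PP d (X₂ ω)) μ := fun c d =>
    hind.comp (measurable_of_countable (PP c)) (measurable_of_countable (PP d))
  -- integral values
  have eU₁ : ∫ ω, U₁ ω ∂μ = 0 := by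
    rw [hU₁def]; rw [PP_integral μ X₁ hX₁m l₁ hX₁ cu₁]
    simp [hcu₁]; ring
  have eU₂ : ∫ ω, U₂ ω ∂μ = 0 := by
    rw [hU₂def]; rw [PP_integral μ X₂ hX₂m l₂ hX₂ cu₂]
    simp [hcu₂]; ring
  have eG₁ : ∫ ω, G₁ ω ∂μ = 0 := by
    rw [hG₁def]; rw [PP_integral μ X₁ hX₁m l₁ hX₁ cg₁]
    simp [hcg₁]; ring
  have eG₂ : ∫ ω, G₂ ω ∂μ = 0 := by
    rw [hG₂def]; rw [PP_integral μ X₂ hX₂m l₂ hX₂ cg₂]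
    simp [hcg₂]; ring
  have eQ₁ : ∫ ω, Q₁ ω ∂μ = l₁/n₁^2 := by
    rw [hQ₁def]; rw [PP_integral μ X₁ hX₁m l₁ hX₁ cq₁]
    simp [hcq₁]; ring
  have eQ₂ : ∫ ω, Q₂ ω ∂μ = l₂/n₂^2 := by
    rw [hQ₂def]; rw [PP_integral μ X₂ hX₂m l₂ hX₂ cq₂]
    simp [hcq₂]; ring
  have eS₁ : ∫ ω, S₁ ω ∂μ = 2*l₁^2/n₁^4 := by
    rw [hS₁def]; rw [PP_integral μ X₁ hX₁m l₁ hX₁ cs₁]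
    simp [hcs₁]; ring
  have eS₂ : ∫ ω, S₂ ω ∂μ = 2*l₂^2/n₂^4 := by
    rw [hS₂def]; rw [PP_integral μ X₂ hX₂m l₂ hX₂ cs₂]
    simp [hcs₂]; ring
  -- pointwise identities
  have hFeq : ∀ ω, F ω = G₁ ω + G₂ ω - 2*(U₁ ω * U₂ ω) := by
    intro ω
    simp only [hF, hG₁def, hG₂def, hU₁def, hU₂def, PP_eval, hcg₁, hcg₂, hcu₁, hcu₂, hl₁, hl₂,
      Matrix.cons_val_zero, Matrix.cons_val_one, Matrix.head_cons, Matrix.cons_val_two,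
      Matrix.tail_cons, Matrix.cons_val_three, Matrix.cons_val_four]
    field_simp
    ring
  have hF2eq : ∀ ω, F ω^2 = S₁ ω + S₂ ω + 4*(Q₁ ω*Q₂ ω) + 2*(G₁ ω*G₂ ω)
      - 4*(T₁ ω*U₂ ω) - 4*(U₁ ω*T₂ ω) := by
    intro ω
    simp only [hF, hS₁def, hS₂def, hQ₁def, hQ₂def, hG₁def, hG₂def, hT₁def, hT₂def,
      hU₁def, hU₂def, PP_eval, hcs₁, hcs₂, hcq₁, hcq₂, hcg₁, hcg₂, hct₁, hct₂, hcu₁, hcu₂,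
      hl₁, hl₂,
      Matrix.cons_val_zero, Matrix.cons_val_one, Matrix.head_cons, Matrix.cons_val_two,
      Matrix.tail_cons, Matrix.cons_val_three, Matrix.cons_val_four]
    field_simp
    ring
  -- product integrability
  have iUU : Integrable (fun ω => U₁ ω * U₂ ω) μ := (ind cu₁ cu₂).integrable_mul iU₁ iU₂
  have iQQ : Integrable (fun ω => Q₁ ω * Q₂ ω) μ := (ind cq₁ cq₂).integrable_mul iQ₁ iQ₂
  have iGG : Integrable (fun ω => G₁ ω * G₂ ω) μ := (ind cg₁ cg₂).integrable_mul iG₁ iG₂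
  have iTU : Integrable (fun ω => T₁ ω * U₂ ω) μ := (ind ct₁ cu₂).integrable_mul iT₁ iU₂
  have iUT : Integrable (fun ω => U₁ ω * T₂ ω) μ := (ind cu₁ ct₂).integrable_mul iU₁ iT₂
  -- product integrals
  have eUU : ∫ ω, U₁ ω * U₂ ω ∂μ = (∫ ω, U₁ ω ∂μ) * ∫ ω, U₂ ω ∂μ :=
    (ind cu₁ cu₂).integral_fun_mul_eq_mul_integral iU₁.1 iU₂.1
  have eQQ : ∫ ω, Q₁ ω * Q₂ ω ∂μ = (∫ ω, Q₁ ω ∂μ) * ∫ ω, Q₂ ω ∂μ :=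
    (ind cq₁ cq₂).integral_fun_mul_eq_mul_integral iQ₁.1 iQ₂.1
  have eGG : ∫ ω, G₁ ω * G₂ ω ∂μ = (∫ ω, G₁ ω ∂μ) * ∫ ω, G₂ ω ∂μ :=
    (ind cg₁ cg₂).integral_fun_mul_eq_mul_integral iG₁.1 iG₂.1
  have eTU : ∫ ω, T₁ ω * U₂ ω ∂μ = (∫ ω, T₁ ω ∂μ) * ∫ ω, U₂ ω ∂μ :=
    (ind ct₁ cu₂).integral_fun_mul_eq_mul_integral iT₁.1 iU₂.1
  have eUT : ∫ ω, U₁ ω * T₂ ω ∂μ = (∫ ω, U₁ ω ∂μ) * ∫ ω, T₂ ω ∂μ :=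
    (ind cu₁ ct₂).integral_fun_mul_eq_mul_integral iU₁.1 iT₂.1
  have hFfun : F = fun ω => G₁ ω + G₂ ω - 2*(U₁ ω * U₂ ω) := funext hFeq
  have iF : Integrable F μ := by
    rw [hFfun]; exact (iG₁.add iG₂).sub (iUU.const_mul 2)
  have eF : ∫ ω, F ω ∂μ = 0 := by
    have i1 : Integrable (fun ω => G₁ ω + G₂ ω) μ := iG₁.add iG₂
    have i2 : Integrable (fun ω => 2*(U₁ ω * U₂ ω)) μ := iUU.const_mul 2
    rw [hFfun, integral_sub i1 i2, integral_add iG₁ iG₂, integral_const_mul,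
      eUU, eU₁, eU₂, eG₁, eG₂]
    norm_num
  have hF2fun : (fun ω => F ω^2) = fun ω => S₁ ω + S₂ ω + 4*(Q₁ ω*Q₂ ω) + 2*(G₁ ω*G₂ ω)
      - 4*(T₁ ω*U₂ ω) - 4*(U₁ ω*T₂ ω) := funext hF2eq
  have iF2 : Integrable (fun ω => F ω^2) μ := by
    rw [hF2fun]
    exact ((((iS₁.add iS₂).add (iQQ.const_mul 4)).add (iGG.const_mul 2)).sub
      (iTU.const_mul 4)).sub (iUT.const_mul 4)
  have eF2 : ∫ ω, F ω^2 ∂μ = 2*l₁^2/n₁^4 + 2*l₂^2/n₂^4 + 4*(l₁/n₁^2*(l₂/n₂^2)) := by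
    have i4QQ : Integrable (fun ω => 4*(Q₁ ω * Q₂ ω)) μ := iQQ.const_mul 4
    have i2GG : Integrable (fun ω => 2*(G₁ ω * G₂ ω)) μ := iGG.const_mul 2
    have i4TU : Integrable (fun ω => 4*(T₁ ω * U₂ ω)) μ := iTU.const_mul 4
    have i4UT : Integrable (fun ω => 4*(U₁ ω * T₂ ω)) μ := iUT.const_mul 4
    have iA : Integrable (fun ω => S₁ ω + S₂ ω) μ := iS₁.add iS₂
    have iB : Integrable (fun ω => S₁ ω + S₂ ω + 4*(Q₁ ω*Q₂ ω)) μ := iA.add i4QQ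
    have iC : Integrable (fun ω => S₁ ω + S₂ ω + 4*(Q₁ ω*Q₂ ω) + 2*(G₁ ω*G₂ ω)) μ :=
      iB.add i2GG
    have iD : Integrable
        (fun ω => S₁ ω + S₂ ω + 4*(Q₁ ω*Q₂ ω) + 2*(G₁ ω*G₂ ω) - 4*(T₁ ω*U₂ ω)) μ :=
      iC.sub i4TU
    rw [hF2fun, integral_sub iD i4UT, integral_sub iC i4TU, integral_add iB i2GG,
      integral_add iA i4QQ, integral_add iS₁ iS₂,
      integral_const_mul, integral_const_mul, integral_const_mul, integral_const_mul,
      eQQ, eGG, eTU, eUT, eU₁, eU₂, eG₁, eG₂, eQ₁, eQ₂, eS₁, eS₂]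
    ring
  have hFm : Measurable F := by
    have h := (measurable_of_countable (fun q : ℕ × ℕ =>
      ((q.1:ℝ)/n₁ - (q.2:ℝ)/n₂)^2 - (q.1:ℝ)/n₁^2 - (q.2:ℝ)/n₂^2
        - 2*(p₁-p₂)*((q.1:ℝ)/n₁ - (q.2:ℝ)/n₂) + (p₁-p₂)^2)).comp (hX₁m.prodMk hX₂m)
    exact h
  have hmem : MemLp F 2 μ :=
    (memLp_two_iff_integrable_sq hFm.aestronglyMeasurable).mpr iF2
  rw [variance_eq_sub hmem]
  have h1 : μ[F^2] = ∫ ω, F ω^2 ∂μ := rfl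
  have h2 : μ[F] = ∫ ω, F ω ∂μ := rfl
  rw [h1, h2, eF2, eF, hl₁, hl₂]
  field_simp
  ring
end

section
/- Let X₁ ~ Poisson(n₁p₁) and X₂ ~ Poisson(n₂p₂) be independent. Then Var((X₁/n₁ - X₂/n₂)² - X₁/n₁² - X₂/n₂²) = 2(p₁/n₁ + p₂/n₂)² + 4(p₁ - p₂)²(p₁/n₁ + p₂/n₂). -/
open MeasureTheory ProbabilityTheory
open scoped ENNReal NNReal

namespace Stmt11Aux

lemma pois_hasSum {l : ℝ} (hl : 0 ≤ l) :
    HasSum (fun m : ℕ => Real.exp (-l) * l ^ m / m.factorial) 1 := by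
  have h := ProbabilityTheory.poissonPMFRealSum l.toNNReal
  simpa [ProbabilityTheory.poissonPMFReal, Real.coe_toNNReal l hl] using h

lemma desc_fac (k : ℕ) : ∀ j : ℕ, (j + k).descFactorial k * j.factorial = (j + k).factorial := by
  induction k with
  | zero => simp
  | succ k ih =>
    intro j
    have h1 : j + (k + 1) = (j + k) + 1 := by omega
    rw [h1, Nat.succ_descFactorial_succ, Nat.factorial_succ, Nat.mul_assoc, ih j]

lemma desc_hasSum {l : ℝ} (hl : 0 ≤ l) (k : ℕ) :
    HasSum (fun m : ℕ => (m.descFactorial k : ℝ) * (Real.exp (-l) * l ^ m / m.factorial))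
      (l ^ k) := by
  set f : ℕ → ℝ := fun m => (m.descFactorial k : ℝ) * (Real.exp (-l) * l ^ m / m.factorial)
    with hf
  have h1 : HasSum (fun j : ℕ => l ^ k * (Real.exp (-l) * l ^ j / j.factorial)) (l ^ k) := by
    simpa using (pois_hasSum hl).mul_left (l ^ k)
  have h2 : (fun j : ℕ => f (j + k)) =
      fun j : ℕ => l ^ k * (Real.exp (-l) * l ^ j / j.factorial) := by
    funext j
    have hfac := desc_fac k j
    have hj : (j.factorial : ℝ) ≠ 0 := Nat.cast_ne_zero.mpr j.factorial_ne_zero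
    have hdesc : ((j + k).descFactorial k : ℝ) = (j + k).factorial / j.factorial := by
      rw [eq_div_iff hj]
      exact_mod_cast hfac
    have hjk : ((j + k).factorial : ℝ) ≠ 0 := Nat.cast_ne_zero.mpr (j + k).factorial_ne_zero
    simp only [hf]
    rw [hdesc, pow_add]
    field_simp
  have h3 : HasSum (fun j : ℕ => f (j + k)) (l ^ k) := by rw [h2]; exact h1
  have h4 := (hasSum_nat_add_iff (f := f) k).mp h3
  have h5 : ∑ i ∈ Finset.range k, f i = 0 := by
    refine Finset.sum_eq_zero fun i hi => ?_
    have : i.descFactorial k = 0 :=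
      Nat.descFactorial_eq_zero_iff_lt.mpr (Finset.mem_range.mp hi)
    simp [hf, this]
  simpa [h5] using h4

lemma cd1 (m : ℕ) : (m.descFactorial 1 : ℝ) = m := by
  rw [Nat.descFactorial_one]

lemma cd2 (m : ℕ) : (m.descFactorial 2 : ℝ) = (m : ℝ) ^ 2 - m := by
  cases m with
  | zero => simp
  | succ n =>
    have h := Nat.succ_descFactorial_succ n 1
    rw [h, Nat.descFactorial_one]
    push_cast
    ring

lemma cd3 (m : ℕ) : (m.descFactorial 3 : ℝ) = (m : ℝ) ^ 3 - 3 * (m : ℝ) ^ 2 + 2 * m := by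
  cases m with
  | zero => simp
  | succ n =>
    have h := Nat.succ_descFactorial_succ n 2
    rw [h, Nat.cast_mul, cd2]
    push_cast
    ring

lemma cd4 (m : ℕ) :
    (m.descFactorial 4 : ℝ) = (m : ℝ) ^ 4 - 6 * (m : ℝ) ^ 3 + 11 * (m : ℝ) ^ 2 - 6 * m := by
  cases m with
  | zero => simp
  | succ n =>
    have h := Nat.succ_descFactorial_succ n 3
    rw [h, Nat.cast_mul, cd3]
    push_cast
    ring

/-- raw moments of the Poisson distribution -/
def mval : ℕ → ℝ → ℝ
  | 0, _ => 1
  | 1, l => l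
  | 2, l => l ^ 2 + l
  | 3, l => l ^ 3 + 3 * l ^ 2 + l
  | 4, l => l ^ 4 + 6 * l ^ 3 + 7 * l ^ 2 + l
  | _, _ => 0

lemma hasSum_pow {l : ℝ} (hl : 0 ≤ l) (k : ℕ) (hk : k ≤ 4) :
    HasSum (fun m : ℕ => (m : ℝ) ^ k * (Real.exp (-l) * l ^ m / m.factorial)) (mval k l) := by
  interval_cases k
  · simpa [mval] using pois_hasSum hl
  · have h := desc_hasSum hl 1
    have he : (fun m : ℕ => (m.descFactorial 1 : ℝ) * (Real.exp (-l) * l ^ m / m.factorial))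
        = fun m : ℕ => (m : ℝ) ^ 1 * (Real.exp (-l) * l ^ m / m.factorial) := by
      funext m; rw [cd1]; ring
    rw [he] at h
    simpa [mval] using h
  · have h := (desc_hasSum hl 2).add (desc_hasSum hl 1)
    have he : (fun m : ℕ => (m.descFactorial 2 : ℝ) * (Real.exp (-l) * l ^ m / m.factorial)
          + (m.descFactorial 1 : ℝ) * (Real.exp (-l) * l ^ m / m.factorial))
        = fun m : ℕ => (m : ℝ) ^ 2 * (Real.exp (-l) * l ^ m / m.factorial) := by
      funext m; rw [cd1, cd2]; ring
    rw [he] at h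
    simpa [mval] using h
  · have h := (desc_hasSum hl 3).add (((desc_hasSum hl 2).mul_left 3).add (desc_hasSum hl 1))
    have he : (fun m : ℕ => (m.descFactorial 3 : ℝ) * (Real.exp (-l) * l ^ m / m.factorial)
          + (3 * ((m.descFactorial 2 : ℝ) * (Real.exp (-l) * l ^ m / m.factorial))
            + (m.descFactorial 1 : ℝ) * (Real.exp (-l) * l ^ m / m.factorial)))
        = fun m : ℕ => (m : ℝ) ^ 3 * (Real.exp (-l) * l ^ m / m.factorial) := by
      funext m; rw [cd1, cd2, cd3]; ring
    rw [he] at h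
    convert h using 1
    simp only [mval, pow_one]
    ring
  · have h := (desc_hasSum hl 4).add (((desc_hasSum hl 3).mul_left 6).add
      (((desc_hasSum hl 2).mul_left 7).add (desc_hasSum hl 1)))
    have he : (fun m : ℕ => (m.descFactorial 4 : ℝ) * (Real.exp (-l) * l ^ m / m.factorial)
          + (6 * ((m.descFactorial 3 : ℝ) * (Real.exp (-l) * l ^ m / m.factorial))
            + (7 * ((m.descFactorial 2 : ℝ) * (Real.exp (-l) * l ^ m / m.factorial))
              + (m.descFactorial 1 : ℝ) * (Real.exp (-l) * l ^ m / m.factorial))))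
        = fun m : ℕ => (m : ℝ) ^ 4 * (Real.exp (-l) * l ^ m / m.factorial) := by
      funext m; rw [cd1, cd2, cd3, cd4]; ring
    rw [he] at h
    convert h using 1
    simp only [mval, pow_one]
    ring

lemma bridge {Ω : Type*} [MeasurableSpace Ω] (μ : Measure Ω) [IsProbabilityMeasure μ]
    {X : Ω → ℕ} (hXm : Measurable X) (f : ℕ → ℝ) (hpos : ∀ m, 0 ≤ f m) {S : ℝ}
    (h : HasSum (fun m => f m * (μ (X ⁻¹' {m})).toReal) S) :
    Integrable (fun ω => f (X ω)) μ ∧ ∫ ω, f (X ω) ∂μ = S := by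
  set ν : Measure ℕ := μ.map X with hν
  have hprob : IsProbabilityMeasure ν := Measure.isProbabilityMeasure_map hXm.aemeasurable
  have hpt : ∀ m : ℕ, ν {m} = μ (X ⁻¹' {m}) := fun m =>
    Measure.map_apply hXm (measurableSet_singleton m)
  have hfm : Measurable f := measurable_of_countable f
  have hint : Integrable f ν := by
    refine ⟨hfm.aestronglyMeasurable, ?_⟩
    have hlt : (∫⁻ a, (‖f a‖₊ : ℝ≥0∞) ∂ν) < ⊤ := by
      rw [lintegral_countable']
      have heq : ∀ a : ℕ, (‖f a‖₊ : ℝ≥0∞) * ν {a}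
          = ENNReal.ofReal (f a * (μ (X ⁻¹' {a})).toReal) := by
        intro a
        rw [← hpt a, ENNReal.ofReal_mul (hpos a)]
        congr 1
        · exact Real.enorm_eq_ofReal (hpos a)
        · rw [ENNReal.ofReal_toReal (measure_ne_top ν _)]
      calc (∑' a : ℕ, (‖f a‖₊ : ℝ≥0∞) * ν {a})
          = ∑' a : ℕ, ENNReal.ofReal (f a * (μ (X ⁻¹' {a})).toReal) := by
            exact tsum_congr heq
        _ = ENNReal.ofReal (∑' a : ℕ, f a * (μ (X ⁻¹' {a})).toReal) :=
            (ENNReal.ofReal_tsum_of_nonneg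
              (fun a => mul_nonneg (hpos a) ENNReal.toReal_nonneg) h.summable).symm
        _ < ⊤ := ENNReal.ofReal_lt_top
    exact hlt
  have hmap : ∫ ω, f (X ω) ∂μ = ∫ m, f m ∂ν := by
    rw [hν, integral_map hXm.aemeasurable hfm.aestronglyMeasurable]
  constructor
  · have := (integrable_map_measure hfm.aestronglyMeasurable hXm.aemeasurable).mp
      (by rw [← hν]; exact hint)
    exact this
  · rw [hmap, integral_countable' hint]
    rw [← h.tsum_eq]
    refine tsum_congr fun m => ?_
    rw [measureReal_def, hpt m, smul_eq_mul, mul_comm]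

lemma moment {Ω : Type*} [MeasurableSpace Ω] (μ : Measure Ω) [IsProbabilityMeasure μ]
    {X : Ω → ℕ} (hXm : Measurable X) {l : ℝ} (hl : 0 ≤ l) (hX : IsPoisson μ X l)
    (k : ℕ) (hk : k ≤ 4) :
    Integrable (fun ω => (X ω : ℝ) ^ k) μ ∧ ∫ ω, (X ω : ℝ) ^ k ∂μ = mval k l := by
  have hs : HasSum (fun m : ℕ => (m : ℝ) ^ k * (μ (X ⁻¹' {m})).toReal) (mval k l) := by
    have heq : (fun m : ℕ => (m : ℝ) ^ k * (μ (X ⁻¹' {m})).toReal)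
        = fun m : ℕ => (m : ℝ) ^ k * (Real.exp (-l) * l ^ m / m.factorial) :=
      funext fun m => by rw [hX m]
    rw [heq]
    exact hasSum_pow hl k hk
  exact bridge μ hXm (fun m : ℕ => (m : ℝ) ^ k) (fun m => by positivity) hs

lemma comb {Ω : Type*} [MeasurableSpace Ω] {μ : Measure Ω} {f g : Ω → ℝ} {A B : ℝ}
    (hf : Integrable f μ ∧ ∫ ω, f ω ∂μ = A) (hg : Integrable g μ ∧ ∫ ω, g ω ∂μ = B) :
    Integrable (fun ω => f ω + g ω) μ ∧ ∫ ω, f ω + g ω ∂μ = A + B :=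
  ⟨hf.1.add hg.1, by rw [integral_add hf.1 hg.1, hf.2, hg.2]⟩

lemma scal {Ω : Type*} [MeasurableSpace Ω] {μ : Measure Ω} {f : Ω → ℝ} {A : ℝ} (c : ℝ)
    (hf : Integrable f μ ∧ ∫ ω, f ω ∂μ = A) :
    Integrable (fun ω => c * f ω) μ ∧ ∫ ω, c * f ω ∂μ = c * A :=
  ⟨hf.1.const_mul c, by rw [integral_const_mul, hf.2]⟩

end Stmt11Aux

set_option maxHeartbeats 2000000 in
open Stmt11Aux in
theorem stmt_11 {Ω : Type*} [MeasurableSpace Ω] (μ : Measure Ω) [IsProbabilityMeasure μ]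
    (X₁ X₂ : Ω → ℕ) (hX₁m : Measurable X₁) (hX₂m : Measurable X₂)
    (n₁ n₂ p₁ p₂ : ℝ) (hn₁ : 0 < n₁) (hn₂ : 0 < n₂)
    (hp₁ : p₁ ∈ Set.Icc (0 : ℝ) 1) (hp₂ : p₂ ∈ Set.Icc (0 : ℝ) 1)
    (hX₁ : IsPoisson μ X₁ (n₁ * p₁)) (hX₂ : IsPoisson μ X₂ (n₂ * p₂))
    (hind : IndepFun X₁ X₂ μ) :
    variance (fun ω => ((X₁ ω : ℝ) / n₁ - (X₂ ω : ℝ) / n₂) ^ 2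
        - (X₁ ω : ℝ) / n₁ ^ 2 - (X₂ ω : ℝ) / n₂ ^ 2) μ
      = 2 * (p₁ / n₁ + p₂ / n₂) ^ 2 + 4 * (p₁ - p₂) ^ 2 * (p₁ / n₁ + p₂ / n₂) := by
  have hl₁ : (0 : ℝ) ≤ n₁ * p₁ := mul_nonneg hn₁.le hp₁.1
  have hl₂ : (0 : ℝ) ≤ n₂ * p₂ := mul_nonneg hn₂.le hp₂.1
  have key : ∀ i j : ℕ, i ≤ 4 → j ≤ 4 →
      Integrable (fun ω => (X₁ ω : ℝ) ^ i * (X₂ ω : ℝ) ^ j) μ ∧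
      ∫ ω, (X₁ ω : ℝ) ^ i * (X₂ ω : ℝ) ^ j ∂μ = mval i (n₁ * p₁) * mval j (n₂ * p₂) := by
    intro i j hi hj
    have hφ : Measurable (fun m : ℕ => (m : ℝ) ^ i) := measurable_of_countable _
    have hψ : Measurable (fun m : ℕ => (m : ℝ) ^ j) := measurable_of_countable _
    have hindp : IndepFun (fun ω => (X₁ ω : ℝ) ^ i) (fun ω => (X₂ ω : ℝ) ^ j) μ :=
      hind.comp hφ hψ
    have h1 := moment μ hX₁m hl₁ hX₁ i hi
    have h2 := moment μ hX₂m hl₂ hX₂ j hj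
    refine ⟨hindp.integrable_mul h1.1 h2.1, ?_⟩
    have hmul := hindp.integral_mul_eq_mul_integral h1.1.aestronglyMeasurable h2.1.aestronglyMeasurable
    exact hmul.trans (by rw [h1.2, h2.2])
  -- first moment
  have E1 := comb (comb (comb (comb
    (scal (1 / n₁ ^ 2) (key 2 0 (by norm_num) (by norm_num)))
    (scal (-2 / (n₁ * n₂)) (key 1 1 (by norm_num) (by norm_num))))
    (scal (1 / n₂ ^ 2) (key 0 2 (by norm_num) (by norm_num))))
    (scal (-1 / n₁ ^ 2) (key 1 0 (by norm_num) (by norm_num))))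
    (scal (-1 / n₂ ^ 2) (key 0 1 (by norm_num) (by norm_num)))
  -- second moment
  have E2 := comb (comb (comb (comb (comb (comb (comb (comb (comb (comb (comb
    (scal (1 / n₁ ^ 4) (key 4 0 (by norm_num) (by norm_num)))
    (scal (-2 / n₁ ^ 4) (key 3 0 (by norm_num) (by norm_num))))
    (scal (1 / n₁ ^ 4) (key 2 0 (by norm_num) (by norm_num))))
    (scal (-4 / (n₁ ^ 3 * n₂)) (key 3 1 (by norm_num) (by norm_num))))
    (scal (4 / (n₁ ^ 3 * n₂) - 2 / (n₁ ^ 2 * n₂ ^ 2)) (key 2 1 (by norm_num) (by norm_num))))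
    (scal (2 / (n₁ ^ 2 * n₂ ^ 2)) (key 1 1 (by norm_num) (by norm_num))))
    (scal (6 / (n₁ ^ 2 * n₂ ^ 2)) (key 2 2 (by norm_num) (by norm_num))))
    (scal (4 / (n₁ * n₂ ^ 3) - 2 / (n₁ ^ 2 * n₂ ^ 2)) (key 1 2 (by norm_num) (by norm_num))))
    (scal (-4 / (n₁ * n₂ ^ 3)) (key 1 3 (by norm_num) (by norm_num))))
    (scal (1 / n₂ ^ 4) (key 0 4 (by norm_num) (by norm_num))))
    (scal (-2 / n₂ ^ 4) (key 0 3 (by norm_num) (by norm_num))))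
    (scal (1 / n₂ ^ 4) (key 0 2 (by norm_num) (by norm_num)))
  have hn₁' : n₁ ≠ 0 := hn₁.ne'
  have hn₂' : n₂ ≠ 0 := hn₂.ne'
  set Y : Ω → ℝ := fun ω => ((X₁ ω : ℝ) / n₁ - (X₂ ω : ℝ) / n₂) ^ 2
      - (X₁ ω : ℝ) / n₁ ^ 2 - (X₂ ω : ℝ) / n₂ ^ 2 with hY
  have hYeq : Y = fun ω =>
      1 / n₁ ^ 2 * ((X₁ ω : ℝ) ^ 2 * (X₂ ω : ℝ) ^ 0)
      + -2 / (n₁ * n₂) * ((X₁ ω : ℝ) ^ 1 * (X₂ ω : ℝ) ^ 1)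
      + 1 / n₂ ^ 2 * ((X₁ ω : ℝ) ^ 0 * (X₂ ω : ℝ) ^ 2)
      + -1 / n₁ ^ 2 * ((X₁ ω : ℝ) ^ 1 * (X₂ ω : ℝ) ^ 0)
      + -1 / n₂ ^ 2 * ((X₁ ω : ℝ) ^ 0 * (X₂ ω : ℝ) ^ 1) := by
    funext ω
    simp only [hY]
    field_simp
    ring
  have hYsqeq : (fun ω => Y ω ^ 2) = fun ω =>
      1 / n₁ ^ 4 * ((X₁ ω : ℝ) ^ 4 * (X₂ ω : ℝ) ^ 0)
      + -2 / n₁ ^ 4 * ((X₁ ω : ℝ) ^ 3 * (X₂ ω : ℝ) ^ 0)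
      + 1 / n₁ ^ 4 * ((X₁ ω : ℝ) ^ 2 * (X₂ ω : ℝ) ^ 0)
      + -4 / (n₁ ^ 3 * n₂) * ((X₁ ω : ℝ) ^ 3 * (X₂ ω : ℝ) ^ 1)
      + (4 / (n₁ ^ 3 * n₂) - 2 / (n₁ ^ 2 * n₂ ^ 2)) * ((X₁ ω : ℝ) ^ 2 * (X₂ ω : ℝ) ^ 1)
      + 2 / (n₁ ^ 2 * n₂ ^ 2) * ((X₁ ω : ℝ) ^ 1 * (X₂ ω : ℝ) ^ 1)
      + 6 / (n₁ ^ 2 * n₂ ^ 2) * ((X₁ ω : ℝ) ^ 2 * (X₂ ω : ℝ) ^ 2)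
      + (4 / (n₁ * n₂ ^ 3) - 2 / (n₁ ^ 2 * n₂ ^ 2)) * ((X₁ ω : ℝ) ^ 1 * (X₂ ω : ℝ) ^ 2)
      + -4 / (n₁ * n₂ ^ 3) * ((X₁ ω : ℝ) ^ 1 * (X₂ ω : ℝ) ^ 3)
      + 1 / n₂ ^ 4 * ((X₁ ω : ℝ) ^ 0 * (X₂ ω : ℝ) ^ 4)
      + -2 / n₂ ^ 4 * ((X₁ ω : ℝ) ^ 0 * (X₂ ω : ℝ) ^ 3)
      + 1 / n₂ ^ 4 * ((X₁ ω : ℝ) ^ 0 * (X₂ ω : ℝ) ^ 2) := by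
    funext ω
    simp only [hY]
    field_simp
    ring
  have hYmeas : AEStronglyMeasurable Y μ := by
    rw [hYeq]
    exact (by fun_prop : Measurable _).aestronglyMeasurable
  have hmem : MemLp Y 2 μ := by
    have hsq : Integrable (fun ω => Y ω ^ 2) μ := by rw [hYsqeq]; exact E2.1
    exact (memLp_two_iff_integrable_sq hYmeas).2 hsq
  rw [variance_eq_sub hmem]
  have hIY2 : μ[Y ^ 2] = ∫ ω, Y ω ^ 2 ∂μ := by
    congr 1
  rw [hIY2, hYsqeq, E2.2]
  simp only [hYeq]
  rw [E1.2]
  simp only [mval]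
  field_simp
  ring
end

section
/- For each positive integer m there exists a constant C_m such that for every Poisson random variable X with mean λ ≥ 0, E[(X - λ)^{2m}] ≤ C_m (λ^m + λ). -/
open MeasureTheory ProbabilityTheory
open scoped ENNReal NNReal

noncomputable def pP (l : ℝ) (n : ℕ) : ℝ := Real.exp (-l) * l ^ n / n.factorial

noncomputable def mM (l : ℝ) (r : ℕ) : ℝ := ∑' n : ℕ, ((n : ℝ) - l) ^ r * pP l n

lemma pP_nonneg {l : ℝ} (hl : 0 ≤ l) (n : ℕ) : 0 ≤ pP l n := by
  unfold pP; positivity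

lemma hasSum_pP {l : ℝ} (hl : 0 ≤ l) : HasSum (pP l) 1 := by
  have := ProbabilityTheory.poissonPMFRealSum l.toNNReal
  exact (by simpa [ProbabilityTheory.poissonPMFReal, pP, Real.coe_toNNReal l hl] using this :
    HasSum (fun n : ℕ => Real.exp (-l) * l ^ n / (n.factorial : ℝ)) 1)

lemma exists_pow_le_two_pow (k : ℕ) : ∃ A : ℝ, 0 ≤ A ∧ ∀ n : ℕ, (n : ℝ) ^ k ≤ A * 2 ^ n := by
  have hs : Summable (fun n : ℕ => (n : ℝ) ^ k * (1/2 : ℝ) ^ n) := by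
    simpa using summable_pow_mul_geometric_of_norm_lt_one (R := ℝ) k
      (r := (1/2 : ℝ)) (by rw [Real.norm_eq_abs, abs_of_pos] <;> norm_num)
  have hnn : ∀ n : ℕ, 0 ≤ (n : ℝ) ^ k * (1/2 : ℝ) ^ n := fun n =>
    mul_nonneg (pow_nonneg n.cast_nonneg _) (by positivity)
  refine ⟨∑' n : ℕ, (n : ℝ) ^ k * (1/2 : ℝ) ^ n, tsum_nonneg hnn, fun n => ?_⟩
  have h1 : (n : ℝ) ^ k * (1/2 : ℝ) ^ n ≤ ∑' n : ℕ, (n : ℝ) ^ k * (1/2 : ℝ) ^ n :=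
    Summable.le_tsum hs n fun m _ => hnn m
  have h2 : (n : ℝ) ^ k = ((n : ℝ) ^ k * (1/2)^n) * 2 ^ n := by
    rw [mul_assoc, ← mul_pow]; norm_num
  rw [h2]
  exact mul_le_mul_of_nonneg_right h1 (by positivity)

lemma summable_pow_mul_pP {l : ℝ} (hl : 0 ≤ l) (k : ℕ) :
    Summable (fun n : ℕ => (n : ℝ) ^ k * pP l n) := by
  obtain ⟨A, hA, h⟩ := exists_pow_le_two_pow k
  have hg : Summable (fun n : ℕ => (A * Real.exp (-l)) * ((2*l) ^ n / n.factorial)) :=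
    (Real.summable_pow_div_factorial (2*l)).mul_left _
  refine Summable.of_nonneg_of_le (fun n => mul_nonneg (pow_nonneg n.cast_nonneg _) (pP_nonneg hl n)) (fun n => ?_) hg
  unfold pP
  have h1 : (n:ℝ)^k * (Real.exp (-l) * l ^ n / n.factorial)
      = ((n:ℝ)^k * l^n) * Real.exp (-l) / n.factorial := by ring
  have h2 : (A * Real.exp (-l)) * ((2*l) ^ n / n.factorial)
      = ((A * 2^n) * l^n) * Real.exp (-l) / n.factorial := by rw [mul_pow]; ring
  rw [h1, h2]
  have h3 : (n:ℝ)^k * l^n ≤ (A * 2^n) * l^n :=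
    mul_le_mul_of_nonneg_right (h n) (pow_nonneg hl n)
  have h4 : (n:ℝ)^k * l^n * Real.exp (-l) ≤ (A * 2^n) * l^n * Real.exp (-l) :=
    mul_le_mul_of_nonneg_right h3 (Real.exp_nonneg _)
  exact div_le_div_of_nonneg_right h4 (by positivity) |>.trans_eq rfl

lemma summable_mul_pP {l : ℝ} (hl : 0 ≤ l) (k r : ℕ) :
    Summable (fun n : ℕ => (n : ℝ) ^ k * ((n : ℝ) - l) ^ r * pP l n) := by
  have hg : Summable (fun n : ℕ => 2^r * ((n:ℝ)^(k+r) * pP l n) + (2^r * l^r) * ((n:ℝ)^k * pP l n)) :=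
    ((summable_pow_mul_pP hl (k+r)).mul_left _).add ((summable_pow_mul_pP hl k).mul_left _)
  apply Summable.of_abs
  refine Summable.of_nonneg_of_le (fun n => abs_nonneg _) (fun n => ?_) hg
  have h1 : |(n:ℝ) - l| ≤ (n:ℝ) + l := by
    have hn : (0:ℝ) ≤ (n:ℝ) := n.cast_nonneg
    rw [abs_le]; constructor <;> nlinarith
  have h2 : |(n:ℝ) - l| ^ r ≤ ((n:ℝ) + l) ^ r := pow_le_pow_left₀ (abs_nonneg _) h1 r
  have h3 : ((n:ℝ) + l) ^ r ≤ 2 ^ r * ((n:ℝ)^r + l^r) := by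
    refine (add_pow_le n.cast_nonneg hl r).trans ?_
    apply mul_le_mul_of_nonneg_right ?_ (by positivity)
    exact pow_le_pow_right₀ (by norm_num : (1:ℝ) ≤ 2) (Nat.sub_le r 1)
  have h4 : |(n:ℝ)^k * ((n:ℝ)-l)^r * pP l n| = (n:ℝ)^k * |(n:ℝ)-l|^r * pP l n := by
    rw [abs_mul, abs_mul, abs_pow, abs_pow, abs_of_nonneg (Nat.cast_nonneg (α := ℝ) n),
      abs_of_nonneg (pP_nonneg hl n)]
  rw [h4]
  have h5 : (n:ℝ)^k * |(n:ℝ)-l|^r ≤ (n:ℝ)^k * (2^r * ((n:ℝ)^r + l^r)) :=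
    mul_le_mul_of_nonneg_left (h2.trans h3) (pow_nonneg n.cast_nonneg _)
  calc (n:ℝ)^k * |(n:ℝ)-l|^r * pP l n
      ≤ (n:ℝ)^k * (2^r * ((n:ℝ)^r + l^r)) * pP l n :=
        mul_le_mul_of_nonneg_right h5 (pP_nonneg hl n)
    _ = 2^r * ((n:ℝ)^(k+r) * pP l n) + (2^r * l^r) * ((n:ℝ)^k * pP l n) := by
        rw [pow_add]; ring

lemma summable_sub_pow {l : ℝ} (hl : 0 ≤ l) (r : ℕ) :
    Summable (fun n : ℕ => ((n : ℝ) - l) ^ r * pP l n) := by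
  simpa using summable_mul_pP hl 0 r

lemma summable_mul_sub_pow {l : ℝ} (hl : 0 ≤ l) (r : ℕ) :
    Summable (fun n : ℕ => (n : ℝ) * ((n : ℝ) - l) ^ r * pP l n) := by
  simpa using summable_mul_pP hl 1 r

lemma pP_shift {l : ℝ} (n : ℕ) : ((n : ℝ) + 1) * pP l (n + 1) = l * pP l n := by
  unfold pP
  rw [Nat.factorial_succ]
  have hf : (n.factorial : ℝ) ≠ 0 := Nat.cast_ne_zero.mpr n.factorial_ne_zero
  push_cast
  field_simp
  ring

lemma mM_rec {l : ℝ} (hl : 0 ≤ l) (r : ℕ) :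
    mM l (r + 1) = l * ∑ k ∈ Finset.range r, (r.choose k : ℝ) * mM l k := by
  have hS1 : ∀ j : ℕ, Summable (fun n : ℕ => ((n : ℝ) - l) ^ j * pP l n) :=
    fun j => summable_sub_pow hl j
  have hS2 : Summable (fun n : ℕ => (n : ℝ) * ((n : ℝ) - l) ^ r * pP l n) :=
    summable_mul_sub_pow hl r
  -- step 1 : split off
  have e1 : mM l (r + 1)
      = (∑' n : ℕ, (n : ℝ) * ((n : ℝ) - l) ^ r * pP l n) - l * mM l r := by
    unfold mM
    rw [← tsum_mul_left (a := l), ← Summable.tsum_sub hS2 ((hS1 r).mul_left l)]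
    exact tsum_congr fun n => by ring
  -- step 2 : shift
  have e2 : (∑' n : ℕ, (n : ℝ) * ((n : ℝ) - l) ^ r * pP l n)
      = l * ∑' n : ℕ, ((n : ℝ) + 1 - l) ^ r * pP l n := by
    rw [Summable.tsum_eq_zero_add hS2]
    simp only [Nat.cast_zero, zero_mul, zero_add, Nat.cast_add, Nat.cast_one]
    rw [← tsum_mul_left (a := l)]
    refine tsum_congr fun n => ?_
    have := pP_shift (l := l) n
    calc ((n:ℝ) + 1) * ((n:ℝ) + 1 - l) ^ r * pP l (n+1)
        = ((n:ℝ) + 1 - l) ^ r * (((n:ℝ) + 1) * pP l (n+1)) := by ring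
      _ = ((n:ℝ) + 1 - l) ^ r * (l * pP l n) := by rw [this]
      _ = l * (((n:ℝ) + 1 - l) ^ r * pP l n) := by ring
  -- step 3 : binomial expansion
  have e3 : (∑' n : ℕ, ((n : ℝ) + 1 - l) ^ r * pP l n)
      = ∑ k ∈ Finset.range (r + 1), (r.choose k : ℝ) * mM l k := by
    have hpt : ∀ n : ℕ, ((n : ℝ) + 1 - l) ^ r * pP l n
        = ∑ k ∈ Finset.range (r + 1), (r.choose k : ℝ) * (((n : ℝ) - l) ^ k * pP l n) := by
      intro n
      have hb : ((n : ℝ) + 1 - l) ^ r = (((n : ℝ) - l) + 1) ^ r := by ring_nf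
      rw [hb, add_pow]
      rw [Finset.sum_mul]
      exact Finset.sum_congr rfl fun k _ => by ring
    rw [tsum_congr hpt, Summable.tsum_finsetSum (fun k _ => (hS1 k).mul_left _)]
    exact Finset.sum_congr rfl fun k _ => by rw [tsum_mul_left]; rfl
  rw [e1, e2, e3, Finset.sum_range_succ, Nat.choose_self]
  push_cast
  ring

lemma mM_zero {l : ℝ} (hl : 0 ≤ l) : mM l 0 = 1 := by
  unfold mM
  simp only [pow_zero, one_mul]
  exact (hasSum_pP hl).tsum_eq

lemma mM_one {l : ℝ} (hl : 0 ≤ l) : mM l 1 = 0 := by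
  have := mM_rec hl 0
  simpa using this

lemma mM_two {l : ℝ} (hl : 0 ≤ l) : mM l 2 = l := by
  have := mM_rec hl 1
  simpa [mM_zero hl] using this

lemma mM_three {l : ℝ} (hl : 0 ≤ l) : mM l 3 = l := by
  have := mM_rec hl 2
  rw [this]
  rw [Finset.sum_range_succ, Finset.sum_range_one]
  simp [mM_zero hl, mM_one hl]

lemma mM_nonneg {l : ℝ} (hl : 0 ≤ l) : ∀ r, 0 ≤ mM l r := by
  intro r
  induction r using Nat.strong_induction_on with
  | _ r ih =>
    match r with
    | 0 => rw [mM_zero hl]; norm_num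
    | (r + 1) =>
      rw [mM_rec hl r]
      apply mul_nonneg hl
      apply Finset.sum_nonneg
      intro k hk
      have hk' := Finset.mem_range.mp hk
      exact mul_nonneg (Nat.cast_nonneg _) (ih k (by omega))

lemma pow_le_pow_add_self {l : ℝ} (hl : 0 ≤ l) {i j : ℕ} (hi : 1 ≤ i) (hij : i ≤ j) :
    l ^ i ≤ l ^ j + l := by
  rcases le_total l 1 with h | h
  · have h1 : l ^ i ≤ l ^ 1 := pow_le_pow_of_le_one hl h hi
    rw [pow_one] at h1
    have := pow_nonneg hl j
    linarith
  · have h1 : l ^ i ≤ l ^ j := pow_le_pow_right₀ h hij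
    linarith

theorem mM_bound (r : ℕ) : ∃ B : ℝ, 0 ≤ B ∧ ∀ l : ℝ, 0 ≤ l → mM l r ≤ B * (l ^ (r / 2) + l) := by
  induction r using Nat.strong_induction_on with
  | _ r ih =>
    match r with
    | 0 =>
      refine ⟨1, by norm_num, fun l hl => ?_⟩
      rw [mM_zero hl]
      simp only [Nat.zero_div, pow_zero, one_mul]
      linarith
    | 1 =>
      refine ⟨0, le_rfl, fun l hl => ?_⟩
      rw [mM_one hl]
      simp
    | 2 =>
      refine ⟨1, by norm_num, fun l hl => ?_⟩
      rw [mM_two hl]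
      norm_num
      nlinarith [pow_nonneg hl 1]
    | 3 =>
      refine ⟨1, by norm_num, fun l hl => ?_⟩
      rw [mM_three hl]
      norm_num
      nlinarith [pow_nonneg hl 1]
    | (k + 4) =>
      have H : ∀ j : ℕ, ∃ B : ℝ, 0 ≤ B ∧
          (j < k + 4 → ∀ l : ℝ, 0 ≤ l → mM l j ≤ B * (l ^ (j / 2) + l)) := by
        intro j
        by_cases h : j < k + 4
        · obtain ⟨B, h0, h1⟩ := ih j h
          exact ⟨B, h0, fun _ => h1⟩
        · exact ⟨0, le_rfl, fun h' => absurd h' h⟩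
      choose Bf hBf0 hBf using H
      set c : ℕ → ℝ := fun j => ((k + 3).choose j : ℝ) with hc
      set D : ℕ → ℝ := fun j => if j ≤ 1 then 1 else 2 * c j * Bf j with hD
      have hD0 : ∀ j, 0 ≤ D j := by
        intro j
        rw [hD]
        dsimp only
        split
        · norm_num
        · have : (0:ℝ) ≤ c j := Nat.cast_nonneg _
          have := hBf0 j
          positivity
      refine ⟨∑ j ∈ Finset.range (k + 3), D j, Finset.sum_nonneg fun j _ => hD0 j,
        fun l hl => ?_⟩
      set E : ℝ := l ^ ((k + 4) / 2) + l with hE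
      have hE0 : 0 ≤ E := by
        have := pow_nonneg hl ((k + 4) / 2)
        rw [hE]; linarith
      have hterm : ∀ j ∈ Finset.range (k + 3), l * (c j * mM l j) ≤ D j * E := by
        intro j hj
        have hjlt : j < k + 3 := Finset.mem_range.mp hj
        match j with
        | 0 =>
          rw [mM_zero hl]
          have hD0' : D 0 = 1 := by rw [hD]; exact if_pos (by norm_num)
          have hc0 : c 0 = 1 := by rw [hc]; simp
          rw [hD0', hc0, one_mul, mul_one, hE]
          have := pow_nonneg hl ((k + 4) / 2)
          linarith
        | 1 =>
          rw [mM_one hl]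
          have hD1 : D 1 = 1 := by rw [hD]; exact if_pos (by norm_num)
          rw [hD1, one_mul, mul_zero, mul_zero]
          exact hE0
        | (j + 2) =>
          have hj2 : 2 ≤ j + 2 := by omega
          have hbound := hBf (j + 2) (by omega) l hl
          have hc0 : (0:ℝ) ≤ c (j + 2) := Nat.cast_nonneg _
          have hB0 := hBf0 (j + 2)
          have hmm := mM_nonneg hl (j + 2)
          have h1 : l * (c (j+2) * mM l (j+2))
              ≤ l * (c (j+2) * (Bf (j+2) * (l ^ ((j+2)/2) + l))) := by
            apply mul_le_mul_of_nonneg_left ?_ hl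
            exact mul_le_mul_of_nonneg_left hbound hc0
          have h2 : l * (c (j+2) * (Bf (j+2) * (l ^ ((j+2)/2) + l)))
              = c (j+2) * Bf (j+2) * (l ^ ((j+2)/2 + 1) + l ^ 2) := by
            rw [pow_succ, pow_two]; ring
          have h3 : l ^ ((j+2)/2 + 1) ≤ E :=
            pow_le_pow_add_self hl (by omega) (by omega)
          have h4 : l ^ 2 ≤ E := pow_le_pow_add_self hl (by omega) (by omega)
          have hDj : D (j + 2) = 2 * c (j+2) * Bf (j+2) := by rw [hD]; exact if_neg (by omega)
          rw [hDj]
          calc l * (c (j+2) * mM l (j+2)) ≤ c (j+2) * Bf (j+2) * (l ^ ((j+2)/2 + 1) + l ^ 2) := by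
                rw [← h2]; exact h1
            _ ≤ c (j+2) * Bf (j+2) * (E + E) := by
                apply mul_le_mul_of_nonneg_left (add_le_add h3 h4) (by positivity)
            _ = 2 * c (j+2) * Bf (j+2) * E := by ring
      calc mM l (k + 4) = l * ∑ j ∈ Finset.range (k + 3), c j * mM l j := mM_rec hl (k + 3)
        _ = ∑ j ∈ Finset.range (k + 3), l * (c j * mM l j) := by rw [Finset.mul_sum]
        _ ≤ ∑ j ∈ Finset.range (k + 3), D j * E := Finset.sum_le_sum hterm
        _ = (∑ j ∈ Finset.range (k + 3), D j) * E := by rw [Finset.sum_mul]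

lemma integral_eq_mM {Ω : Type} [MeasurableSpace Ω] (μ : Measure Ω) [IsProbabilityMeasure μ]
    (X : Ω → ℕ) (hX : Measurable X) (l : ℝ) (hl : 0 ≤ l) (hP : IsPoisson μ X l) (m : ℕ) :
    ∫ ω, ((X ω : ℝ) - l) ^ (2 * m) ∂μ = mM l (2 * m) := by
  set f : ℕ → ℝ := fun n => ((n : ℝ) - l) ^ (2 * m) with hf
  have hf0 : ∀ n, 0 ≤ f n := fun n => by
    rw [hf]; dsimp only; rw [mul_comm, pow_mul]; positivity
  set ν : Measure ℕ := μ.map X with hν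
  haveI : IsProbabilityMeasure ν := Measure.isProbabilityMeasure_map hX.aemeasurable
  have htoReal : ∀ n : ℕ, (ν {n}).toReal = pP l n := by
    intro n
    rw [hν, Measure.map_apply hX (measurableSet_singleton n)]
    exact hP n
  have hsing : ∀ n : ℕ, ν {n} = ENNReal.ofReal (pP l n) := by
    intro n
    rw [← htoReal n, ENNReal.ofReal_toReal (measure_ne_top ν _)]
  have hsm : StronglyMeasurable f := (measurable_from_top (f := f)).stronglyMeasurable
  have hsummable : Summable (fun n : ℕ => ((n : ℝ) - l) ^ (2 * m) * pP l n) :=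
    summable_sub_pow hl (2 * m)
  have hInt : Integrable f ν := by
    refine ⟨hsm.aestronglyMeasurable, ?_⟩
    rw [HasFiniteIntegral]
    rw [lintegral_countable' (fun n => ‖f n‖ₑ)]
    have heq : ∀ n : ℕ, ‖f n‖ₑ * ν {n} = ENNReal.ofReal (f n * pP l n) := by
      intro n
      rw [hsing n, Real.enorm_eq_ofReal (hf0 n),
        ← ENNReal.ofReal_mul (hf0 n)]
    rw [tsum_congr heq, ← ENNReal.ofReal_tsum_of_nonneg
      (fun n => mul_nonneg (hf0 n) (pP_nonneg hl n)) hsummable]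
    exact ENNReal.ofReal_lt_top
  have h1 : ∫ ω, ((X ω : ℝ) - l) ^ (2 * m) ∂μ = ∫ n, f n ∂ν := by
    rw [hν, integral_map hX.aemeasurable hsm.aestronglyMeasurable]
  rw [h1, integral_countable' hInt]
  unfold mM
  refine tsum_congr fun n => ?_
  rw [measureReal_def, htoReal n, smul_eq_mul, mul_comm]

theorem stmt_13 (m : ℕ) (hm : 0 < m) :
    ∃ C : ℝ, ∀ (Ω : Type) (_ : MeasurableSpace Ω) (μ : Measure Ω),
      IsProbabilityMeasure μ → ∀ (X : Ω → ℕ), Measurable X → ∀ l : ℝ, 0 ≤ l →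
        IsPoisson μ X l →
          ∫ ω, ((X ω : ℝ) - l) ^ (2 * m) ∂μ ≤ C * (l ^ m + l) := by
  obtain ⟨B, hB0, hB⟩ := mM_bound (2 * m)
  refine ⟨B, fun Ω _ μ hμ X hX l hl hP => ?_⟩
  haveI := hμ
  rw [integral_eq_mM μ X hX l hl hP m]
  have h2 : (2 * m) / 2 = m := by omega
  have := hB l hl
  rwa [h2] at this
end
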